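/- arXiv:2006.14844 — 8 statements merged into one kernel-verified Lean document; each statement's English description precedes it below -/
import Mathlib

section
/- Let m > 0 and let U be smooth on an open cone of ℝⁿ invariant under positive dilations, positively homogeneous of degree −2 (U(s q) = s^{−2} U(q) for all s > 0). Let q : I → ℝⁿ be a solution of m q̈ = −∇U(q) and let E = (1/2) m |q̇(t)|² + U(q(t)) denote its (constant) energy. Then the function t ↦ m q̇(t) · q(t) − 2 t E is constant on I. -/
open scoped RealInnerProductSpace ContDiff

/-- if `U` is smooth on an open cone of `ℝⁿ`, positively homogeneous of
degree `−2`, and `q : I → ℝⁿ` solves `m q̈ = −∇U(q)` with constant energy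
`E = (1/2) m |q̇|² + U(q)`, then `t ↦ m q̇(t)·q(t) − 2 t E` is constant on `I`. -/
theorem stmt4 (n : ℕ) (m : ℝ) (hm : 0 < m)
    (Ω : Set (EuclideanSpace ℝ (Fin n))) (hΩ : IsOpen Ω)
    (hcone : ∀ x ∈ Ω, ∀ s : ℝ, 0 < s → s • x ∈ Ω)
    (U : EuclideanSpace ℝ (Fin n) → ℝ)
    (hU : ContDiffOn ℝ ∞ U Ω)
    (hhom : ∀ x ∈ Ω, ∀ s : ℝ, 0 < s → U (s • x) = (s ^ 2)⁻¹ * U x)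
    (a b : ℝ) -- the open interval I = (a, b)
    (q q' q'' : ℝ → EuclideanSpace ℝ (Fin n))
    (hmem : ∀ t ∈ Set.Ioo a b, q t ∈ Ω)
    (hq : ∀ t ∈ Set.Ioo a b, HasDerivAt q (q' t) t)
    (hq' : ∀ t ∈ Set.Ioo a b, HasDerivAt q' (q'' t) t)
    (heq : ∀ t ∈ Set.Ioo a b, m • q'' t = - gradient U (q t))
    (E : ℝ)
    (hE : ∀ t ∈ Set.Ioo a b, (1 / 2) * m * ‖q' t‖ ^ 2 + U (q t) = E) :
    ∀ t₁ ∈ Set.Ioo a b, ∀ t₂ ∈ Set.Ioo a b,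
      m * ⟪q' t₁, q t₁⟫ - 2 * t₁ * E = m * ⟪q' t₂, q t₂⟫ - 2 * t₂ * E := by
  -- U is differentiable on Ω
  have hdiffU : ∀ x ∈ Ω, DifferentiableAt ℝ U x := by
    intro x hx
    exact (hU.differentiableOn (by norm_num)).differentiableAt (hΩ.mem_nhds hx)
  -- Euler's identity for homogeneity of degree -2
  have euler : ∀ x ∈ Ω, ⟪gradient U x, x⟫ = -2 * U x := by
    intro x hx
    have hd := hdiffU x hx
    have h1 : HasDerivAt (fun s : ℝ => U (s • x)) (fderiv ℝ U x x) 1 := by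
      have hfx : HasFDerivAt U (fderiv ℝ U x) (id (1 : ℝ) • x) := by
        simpa using hd.hasFDerivAt
      have := hfx.comp_hasDerivAt 1 ((hasDerivAt_id (1 : ℝ)).smul_const x)
      rw [one_smul] at this; exact this
    have h2 : HasDerivAt (fun s : ℝ => ((s : ℝ) ^ 2)⁻¹ * U x) (-2 * U x) 1 := by
      have := ((hasDerivAt_pow 2 (1 : ℝ)).inv (by norm_num)).mul_const (U x)
      refine this.congr_deriv ?_
      norm_num
    have heqv : (fun s : ℝ => U (s • x)) =ᶠ[nhds (1 : ℝ)] fun s => ((s : ℝ) ^ 2)⁻¹ * U x :=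
      Filter.eventually_of_mem (Ioi_mem_nhds one_pos) fun s hs => hhom x hx s hs
    have h1' : HasDerivAt (fun s : ℝ => ((s : ℝ) ^ 2)⁻¹ * U x) (fderiv ℝ U x x) 1 :=
      h1.congr_of_eventuallyEq heqv.symm
    have hfd : fderiv ℝ U x x = -2 * U x := h1'.unique h2
    have : ⟪gradient U x, x⟫ = fderiv ℝ U x x := InnerProductSpace.toDual_symm_apply
    rw [this, hfd]
  -- the function in question has zero derivative on (a,b)
  set f : ℝ → ℝ := fun t => m * ⟪q' t, q t⟫ - 2 * t * E with hf
  have hderiv : ∀ t ∈ Set.Ioo a b, HasDerivAt f 0 t := by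
    intro t ht
    have hinner := (HasDerivAt.inner ℝ (hq' t ht) (hq t ht))
    have hlin : HasDerivAt (fun s : ℝ => 2 * s * E) (2 * E) t := by
      simpa using (((hasDerivAt_id t).const_mul (2 : ℝ)).mul_const E)
    have hD := (hinner.const_mul m).sub hlin
    have key : m * (⟪q' t, q' t⟫ + ⟪q'' t, q t⟫) - 2 * E = 0 := by
      have h1 : m * ⟪q'' t, q t⟫ = -⟪gradient U (q t), q t⟫ := by
        rw [← real_inner_smul_left, heq t ht, inner_neg_left]
      have h2 : ⟪gradient U (q t), q t⟫ = -2 * U (q t) := euler (q t) (hmem t ht)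
      have h3 : ⟪q' t, q' t⟫ = ‖q' t‖ ^ 2 := real_inner_self_eq_norm_sq _
      have h4 := hE t ht
      rw [mul_add, h3, h1, h2]
      nlinarith [h4]
    exact key ▸ hD
  -- conclude constancy via zero derivative on a convex set
  intro t₁ ht₁ t₂ ht₂
  have hdiff : DifferentiableOn ℝ f (Set.Ioo a b) := fun t ht =>
    ((hderiv t ht).differentiableAt).differentiableWithinAt
  have hzero : ∀ t ∈ Set.Ioo a b, fderivWithin ℝ f (Set.Ioo a b) t = 0 := by
    intro t ht
    have h := (hderiv t ht).hasFDerivAt.hasFDerivWithinAt.fderivWithin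
      ((isOpen_Ioo.uniqueDiffOn) t ht)
    rw [h]
    ext v
    simp
  exact (convex_Ioo a b).is_const_of_fderivWithin_eq_zero hdiff hzero ht₁ ht₂
end

section
/- Let m, k > 0 and let U : ℝⁿ → ℝ be smooth with U(q) ≥ 0 for all q. If q : I → ℝⁿ solves m q̈ = −k q̇ − ∇U(q) on an interval I and t₀ ∈ I, then for all t ∈ I with t ≤ t₀ one has m e^{2kt/m} |q̇(t)|² ≤ e^{2kt₀/m} ( m |q̇(t₀)|² + 2 U(q(t₀)) ); in particular, on any bounded subinterval (t₁, t₀] ⊆ I the velocity q̇(t) is bounded. -/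
open scoped ContDiff
open scoped RealInnerProductSpace

/-- for the viscous-resistance equation `m q̈ = −k q̇ − ∇U(q)` with
smooth `U ≥ 0`, every solution satisfies, for `t ≤ t₀`,
`m e^{2kt/m}|q̇(t)|² ≤ e^{2kt₀/m}(m|q̇(t₀)|² + 2U(q(t₀)))`; in particular on every
bounded subinterval `(t₁, t₀]` of `I` the velocity is bounded. -/
theorem stmt8 (n : ℕ) (m k : ℝ) (hm : 0 < m) (hk : 0 < k)
    (U : EuclideanSpace ℝ (Fin n) → ℝ) (hU : ContDiff ℝ ∞ U)
    (hUpos : ∀ x, 0 ≤ U x)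
    (I : Set ℝ) (hI : I.OrdConnected)
    (q q' q'' : ℝ → EuclideanSpace ℝ (Fin n))
    (hq : ∀ t ∈ I, HasDerivAt q (q' t) t)
    (hq' : ∀ t ∈ I, HasDerivAt q' (q'' t) t)
    (heq : ∀ t ∈ I, m • q'' t = -(k • q' t) - gradient U (q t))
    (t₀ : ℝ) (ht₀ : t₀ ∈ I) :
    (∀ t ∈ I, t ≤ t₀ →
      m * Real.exp (2 * k * t / m) * ‖q' t‖ ^ 2
        ≤ Real.exp (2 * k * t₀ / m) * (m * ‖q' t₀‖ ^ 2 + 2 * U (q t₀))) ∧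
    (∀ t₁ : ℝ, ∃ C : ℝ, ∀ t ∈ I ∩ Set.Ioc t₁ t₀, ‖q' t‖ ≤ C) := by
  set E : ℝ → ℝ := fun t => Real.exp (2 * k * t / m) * (m * ‖q' t‖ ^ 2 + 2 * U (q t)) with hE
  have key : ∀ t ∈ I, HasDerivAt E (Real.exp (2 * k * t / m) * (4 * k * U (q t) / m)) t := by
    intro t ht
    have hdq := hq t ht
    have hdq' := hq' t ht
    have hinner : HasDerivAt (fun s => ‖q' s‖ ^ 2) (⟪q' t, q'' t⟫ + ⟪q'' t, q' t⟫) t := by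
      have h := hdq'.inner ℝ hdq'
      have hfun : (fun s => (⟪q' s, q' s⟫ : ℝ)) = fun s => ‖q' s‖ ^ 2 :=
        funext fun s => real_inner_self_eq_norm_sq _
      rwa [hfun] at h
    have hg : HasGradientAt U (gradient U (q t)) (q t) :=
      ((hU.differentiable (by simp)) (q t)).hasGradientAt
    have hUc : HasDerivAt (fun s => U (q s)) ⟪gradient U (q t), q' t⟫ t := by
      have h := hg.hasFDerivAt.comp_hasDerivAt t hdq
      convert h using 1
      · rfl
      · rfl
      · rfl
      · simp
    have hexp : HasDerivAt (fun s => Real.exp (2 * k * s / m))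
        (Real.exp (2 * k * t / m) * (2 * k / m)) t := by
      have h1 : HasDerivAt (fun s : ℝ => 2 * k * s / m) (2 * k / m) t := by
        simpa using ((hasDerivAt_id t).const_mul (2 * k)).div_const m
      simpa [mul_comm] using h1.exp
    have hf : HasDerivAt (fun s => m * ‖q' s‖ ^ 2 + 2 * U (q s))
        (m * (⟪q' t, q'' t⟫ + ⟪q'' t, q' t⟫) + 2 * ⟪gradient U (q t), q' t⟫) t :=
      (hinner.const_mul m).add (hUc.const_mul 2)
    have hEd := hexp.mul hf
    convert hEd using 1
    · rfl
    · rfl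
    · rfl
    have h3 : ⟪m • q'' t, q' t⟫ = -(k * ⟪q' t, q' t⟫) - ⟪gradient U (q t), q' t⟫ := by
      rw [heq t ht, inner_sub_left, inner_neg_left, real_inner_smul_left]
    rw [real_inner_smul_left] at h3
    have hcomm : (⟪q' t, q'' t⟫ : ℝ) = ⟪q'' t, q' t⟫ := real_inner_comm _ _
    have hns : (⟪q' t, q' t⟫ : ℝ) = ‖q' t‖ ^ 2 := real_inner_self_eq_norm_sq _
    rw [hns] at h3
    have hA : m * (⟪q' t, q'' t⟫ + ⟪q'' t, q' t⟫) + 2 * ⟪gradient U (q t), q' t⟫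
        = -(2 * k * ‖q' t‖ ^ 2) := by rw [hcomm]; linarith
    rw [hA]
    have hm' : m ≠ 0 := ne_of_gt hm
    field_simp
    ring
  have hconv : Convex ℝ I := convex_iff_ordConnected.mpr hI
  have hmono : MonotoneOn E I := by
    refine monotoneOn_of_hasDerivWithinAt_nonneg hconv
      (fun t ht => (key t ht).continuousAt.continuousWithinAt)
      (fun t ht => ((key t (interior_subset ht)).hasDerivWithinAt)) ?_
    intro t ht
    have hU0 := hUpos (q t)
    positivity
  have main : ∀ t ∈ I, t ≤ t₀ →
      m * Real.exp (2 * k * t / m) * ‖q' t‖ ^ 2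
        ≤ Real.exp (2 * k * t₀ / m) * (m * ‖q' t₀‖ ^ 2 + 2 * U (q t₀)) := by
    intro t ht htle
    have h1 : E t ≤ E t₀ := hmono ht ht₀ htle
    have h2 : m * Real.exp (2 * k * t / m) * ‖q' t‖ ^ 2 ≤ E t := by
      rw [hE]
      have hU0 := hUpos (q t)
      have he : (0:ℝ) < Real.exp (2 * k * t / m) := Real.exp_pos _
      nlinarith
    exact h2.trans h1
  refine ⟨main, fun t₁ => ?_⟩
  refine ⟨Real.sqrt (E t₀ / (m * Real.exp (2 * k * t₁ / m))), fun t ⟨ht, ht1, ht2⟩ => ?_⟩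
  have hmain := main t ht ht2
  have hexple : Real.exp (2 * k * t₁ / m) ≤ Real.exp (2 * k * t / m) := by
    apply Real.exp_le_exp.mpr
    have h : 2 * k * t₁ ≤ 2 * k * t := by nlinarith [ht1.le]
    exact div_le_div_of_nonneg_right h hm.le
  have hpos : (0:ℝ) < m * Real.exp (2 * k * t₁ / m) := by positivity
  have hsq : ‖q' t‖ ^ 2 ≤ E t₀ / (m * Real.exp (2 * k * t₁ / m)) := by
    rw [le_div_iff₀ hpos]
    have : m * Real.exp (2 * k * t₁ / m) * ‖q' t‖ ^ 2
        ≤ m * Real.exp (2 * k * t / m) * ‖q' t‖ ^ 2 :=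
      mul_le_mul_of_nonneg_right (mul_le_mul_of_nonneg_left hexple hm.le) (sq_nonneg _)
    calc ‖q' t‖ ^ 2 * (m * Real.exp (2 * k * t₁ / m))
        = m * Real.exp (2 * k * t₁ / m) * ‖q' t‖ ^ 2 := by ring
      _ ≤ m * Real.exp (2 * k * t / m) * ‖q' t‖ ^ 2 := this
      _ ≤ E t₀ := hmain
  calc ‖q' t‖ = Real.sqrt (‖q' t‖ ^ 2) := by
        rw [Real.sqrt_sq (norm_nonneg _)]
    _ ≤ Real.sqrt (E t₀ / (m * Real.exp (2 * k * t₁ / m))) := Real.sqrt_le_sqrt hsq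
end

section
/- Let m, k > 0 and let U : ℝⁿ → ℝ be smooth with 0 ≤ U(q) ≤ U_sup < +∞ for all q ∈ ℝⁿ. Then every solution of m q̈ = −k |q̇| q̇ − ∇U(q) whose initial kinetic energy exceeds U_sup explodes in the past in finite time; equivalently, there is no C² function q : (−∞, t₀] → ℝⁿ satisfying m q̈(t) = −k |q̇(t)| q̇(t) − ∇U(q(t)) for all t ≤ t₀ together with (m/2) |q̇(t₀)|² > U_sup. -/
open scoped ContDiff

private lemma stmt12_aux (a s : ℝ) (hs : s ≠ 0) : -(-a / (2 * s)) / s ^ 2 = a / (2 * s ^ 3) := by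
  field_simp

/-- for the hydraulic-resistance equation `m q̈ = −k|q̇|q̇ − ∇U(q)` with
smooth `U` satisfying `0 ≤ U ≤ U_sup < +∞`, every solution whose kinetic energy at some
time `t₀` exceeds `U_sup` explodes in the past in finite time: there is no C² solution
defined on all of `(−∞, t₀]` with `(m/2)|q̇(t₀)|² > U_sup`. -/
theorem stmt12 (n : ℕ) (m k Usup : ℝ) (hm : 0 < m) (hk : 0 < k)
    (U : EuclideanSpace ℝ (Fin n) → ℝ) (hU : ContDiff ℝ ∞ U)
    (hUpos : ∀ x, 0 ≤ U x) (hUsup : ∀ x, U x ≤ Usup) :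
    ∀ t₀ : ℝ,
      ¬ ∃ q q' q'' : ℝ → EuclideanSpace ℝ (Fin n),
        (∀ t ≤ t₀,
          HasDerivAt q (q' t) t ∧
          HasDerivAt q' (q'' t) t ∧
          m • q'' t = -((k * ‖q' t‖) • q' t) - gradient U (q t)) ∧
        (m / 2) * ‖q' t₀‖ ^ 2 > Usup := by
  intro t₀
  rintro ⟨q, q', q'', hsol, hT⟩
  set E : ℝ → ℝ := fun t => (m/2) * ‖q' t‖^2 + U (q t) with hEdef
  -- derivative of the total energy
  have hEderiv : ∀ t ≤ t₀, HasDerivAt E (-(k * ‖q' t‖^3)) t := by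
    intro t ht
    obtain ⟨hq, hq', heq⟩ := hsol t ht
    have hinner : HasDerivAt (fun s => (inner ℝ (q' s) (q' s) : ℝ))
        (inner ℝ (q' t) (q'' t) + inner ℝ (q'' t) (q' t)) t := hq'.inner ℝ hq'
    have hgrad : HasGradientAt U (gradient U (q t)) (q t) :=
      (hU.differentiable (by simp)).differentiableAt.hasGradientAt
    have hUq : HasDerivAt (fun s => U (q s)) (inner ℝ (gradient U (q t)) (q' t) : ℝ) t := by
      have := hgrad.hasFDerivAt.comp_hasDerivAt t hq
      simpa [Function.comp_def] using this
    have hE1 : HasDerivAt E ((m/2) * ((inner ℝ (q' t) (q'' t) : ℝ) + inner ℝ (q'' t) (q' t))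
        + inner ℝ (gradient U (q t)) (q' t)) t := by
      have hfun : E = fun s => (m/2) * (inner ℝ (q' s) (q' s) : ℝ) + U (q s) := by
        funext s
        rw [hEdef, real_inner_self_eq_norm_sq]
      rw [hfun]
      exact (hinner.const_mul (m/2)).add hUq
    convert hE1 using 1
    have h2 := congrArg (fun v => (inner ℝ v (q' t) : ℝ)) heq
    simp only [inner_smul_left, inner_sub_left, inner_neg_left, RCLike.star_def,
      conj_trivial, real_inner_smul_left] at h2
    have hsymm : (inner ℝ (q' t) (q'' t) : ℝ) = inner ℝ (q'' t) (q' t) := real_inner_comm _ _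
    have hnorm : (inner ℝ (q' t) (q' t) : ℝ) = ‖q' t‖^2 := real_inner_self_eq_norm_sq _
    rw [hnorm] at h2
    nlinarith [h2, hsymm]
  have hcont : ContinuousOn E (Set.Iic t₀) := fun t ht =>
    (hEderiv t ht).continuousAt.continuousWithinAt
  have hanti : AntitoneOn E (Set.Iic t₀) := by
    apply antitoneOn_of_deriv_nonpos (convex_Iic t₀) hcont
    · intro t ht
      rw [interior_Iic] at ht
      exact ((hEderiv t ht.le).differentiableAt).differentiableWithinAt
    · intro t ht
      rw [interior_Iic] at ht
      rw [(hEderiv t ht.le).deriv]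
      have : (0:ℝ) ≤ k * ‖q' t‖^3 := by positivity
      linarith
  have hEt0 : Usup < E t₀ := by
    have := hUpos (q t₀)
    rw [hEdef]
    dsimp only
    linarith
  -- g t := E t - Usup is positive on Iic t₀
  have hgpos : ∀ t ≤ t₀, 0 < E t - Usup := by
    intro t ht
    have := hanti ht (le_refl t₀) ht
    linarith
  -- kinetic bound: (m/2)‖q' t‖² ≥ E t - Usup
  have hkin : ∀ t ≤ t₀, E t - Usup ≤ (m/2) * ‖q' t‖^2 := by
    intro t ht
    have := hUsup (q t)
    rw [hEdef]
    dsimp only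
    linarith
  -- h t := (√(E t - Usup))⁻¹
  set h : ℝ → ℝ := fun t => (Real.sqrt (E t - Usup))⁻¹ with hhdef
  set C : ℝ := k * (Real.sqrt (2/m))^3 / 2 with hCdef
  have hsmpos : 0 < Real.sqrt (2/m) := Real.sqrt_pos.mpr (by positivity)
  have hCpos : 0 < C := by rw [hCdef]; positivity
  have hhderiv : ∀ t ≤ t₀, HasDerivAt h
      (-(-(k * ‖q' t‖^3) / (2 * Real.sqrt (E t - Usup))) / (Real.sqrt (E t - Usup))^2) t := by
    intro t ht
    have hg : HasDerivAt (fun s => E s - Usup) (-(k * ‖q' t‖^3)) t :=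
      (hEderiv t ht).sub_const Usup
    have hne : E t - Usup ≠ 0 := (hgpos t ht).ne'
    have hsq := hg.sqrt hne
    have hsne : Real.sqrt (E t - Usup) ≠ 0 := (Real.sqrt_pos.mpr (hgpos t ht)).ne'
    exact hsq.inv hsne
  -- the derivative of h is at least C on Iic t₀
  have hhbound : ∀ t ≤ t₀,
      C ≤ -(-(k * ‖q' t‖^3) / (2 * Real.sqrt (E t - Usup))) / (Real.sqrt (E t - Usup))^2 := by
    intro t ht
    set g := E t - Usup with hg
    set sg := Real.sqrt g with hsg
    set sm := Real.sqrt (2/m) with hsm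
    have hgp : 0 < g := hgpos t ht
    have hsgp : 0 < sg := Real.sqrt_pos.mpr hgp
    have hsg2 : sg^2 = g := Real.sq_sqrt hgp.le
    have hsm2 : sm^2 = 2/m := Real.sq_sqrt (by positivity)
    have hv2 : (sm * sg)^2 ≤ ‖q' t‖^2 := by
      have hk2 := hkin t ht
      rw [mul_pow, hsg2, hsm2, hg]
      rw [hg] at *
      have : 2 / m * (E t - Usup) ≤ 2 / m * (m / 2 * ‖q' t‖ ^ 2) :=
        mul_le_mul_of_nonneg_left hk2 (by positivity)
      calc 2 / m * (E t - Usup) ≤ 2 / m * (m / 2 * ‖q' t‖ ^ 2) := this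
        _ = ‖q' t‖ ^ 2 := by field_simp
    have hv : sm * sg ≤ ‖q' t‖ := by
      have hvnn : (0:ℝ) ≤ ‖q' t‖ := norm_nonneg _
      nlinarith
    have hv3 : sm^3 * sg^3 ≤ ‖q' t‖^3 := by
      calc sm^3 * sg^3 = (sm * sg)^3 := by ring
        _ ≤ ‖q' t‖^3 := pow_le_pow_left₀ (by positivity) hv 3
    have key : k * sm^3 / 2 ≤ k * ‖q' t‖^3 / (2 * sg^3) := by
      rw [div_le_div_iff₀ (by norm_num) (by positivity)]
      nlinarith [mul_le_mul_of_nonneg_left hv3 hk.le]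
    calc C = k * sm^3 / 2 := hCdef
      _ ≤ k * ‖q' t‖^3 / (2 * sg^3) := key
      _ = -(-(k * ‖q' t‖^3) / (2 * Real.sqrt (E t - Usup))) / (Real.sqrt (E t - Usup))^2 :=
          (stmt12_aux (k * ‖q' t‖^3) sg hsgp.ne').symm
  -- φ t := h t - C * t is monotone on Iic t₀
  have hφmono : MonotoneOn (fun t => h t - C * t) (Set.Iic t₀) := by
    apply monotoneOn_of_deriv_nonneg (convex_Iic t₀)
    · intro t ht
      exact (((hhderiv t ht).sub ((hasDerivAt_id t).const_mul C)).continuousAt).continuousWithinAt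
    · intro t ht
      rw [interior_Iic] at ht
      exact (((hhderiv t ht.le).sub ((hasDerivAt_id t).const_mul C)).differentiableAt).differentiableWithinAt
    · intro t ht
      rw [interior_Iic] at ht
      have hd : HasDerivAt (fun t => h t - C * t)
          (-(-(k * ‖q' t‖^3) / (2 * Real.sqrt (E t - Usup))) / (Real.sqrt (E t - Usup))^2 - C)
          t := by
        exact ((hhderiv t ht.le).sub ((hasDerivAt_id' t).const_mul C)).congr_deriv (by ring)
      rw [hd.deriv]
      linarith [hhbound t ht.le]
  -- contradiction: pick t far in the past
  set t₁ : ℝ := t₀ - (h t₀ / C + 1) with ht₁def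
  have ht₁le : t₁ ≤ t₀ := by
    have hht0 : 0 < h t₀ := by
      rw [hhdef]
      exact inv_pos.mpr (Real.sqrt_pos.mpr (hgpos t₀ le_rfl))
    rw [ht₁def]
    have : 0 < h t₀ / C + 1 := by positivity
    linarith
  have hmono := hφmono (Set.mem_Iic.mpr ht₁le) (Set.mem_Iic.mpr le_rfl) ht₁le
  have hh1pos : 0 < h t₁ := by
    rw [hhdef]
    exact inv_pos.mpr (Real.sqrt_pos.mpr (hgpos t₁ ht₁le))
  dsimp only at hmono
  have hsub : C * t₀ - C * t₁ = h t₀ + C := by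
    rw [ht₁def]
    field_simp
    ring
  linarith
end

section
/- Let g > 0 and let (q₁,q₂,q₃) : I → ℝ³ be a solution of the conservative Maxwell–Bloch system q̈₁ = g² q₁ q̇₃, q̈₂ = g² q₂ q̇₃, q̈₃ = −( q₁ q̇₁ + q₂ q̇₂ ). Let E = (1/2)( q̇₁² + q̇₂² + g² q̇₃² ) and B = q̇₃ + (1/2)( q₁² + q₂² ) be the (constant) values of its first integrals. Then z(t) := q̇₃(t) is three times differentiable and satisfies the second-order equation z̈(t) + 2 B g² z(t) + 2E − 3 g² z(t)² = 0 on I. -/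
/-- along any solution of the conservative Maxwell–Bloch system with
first-integral values `E` and `B`, the function `z := q̇₃` is three times differentiable
(on `I`) and satisfies `z̈ + 2Bg²z + 2E − 3g²z² = 0` on `I`. -/
theorem stmt15 (g : ℝ) (hg : 0 < g)
    (I : Set ℝ) (hI : I.OrdConnected)
    (q₁ q₂ q₃ q₁' q₂' q₃' q₁'' q₂'' q₃'' : ℝ → ℝ)
    (hq₁ : ∀ t ∈ I, HasDerivAt q₁ (q₁' t) t)
    (hq₂ : ∀ t ∈ I, HasDerivAt q₂ (q₂' t) t)
    (hq₃ : ∀ t ∈ I, HasDerivAt q₃ (q₃' t) t)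
    (hq₁' : ∀ t ∈ I, HasDerivAt q₁' (q₁'' t) t)
    (hq₂' : ∀ t ∈ I, HasDerivAt q₂' (q₂'' t) t)
    (hq₃' : ∀ t ∈ I, HasDerivAt q₃' (q₃'' t) t)
    (heq₁ : ∀ t ∈ I, q₁'' t = g ^ 2 * q₁ t * q₃' t)
    (heq₂ : ∀ t ∈ I, q₂'' t = g ^ 2 * q₂ t * q₃' t)
    (heq₃ : ∀ t ∈ I, q₃'' t = -(q₁ t * q₁' t + q₂ t * q₂' t))
    (E B : ℝ)
    (hE : ∀ t ∈ I, (1 / 2) * (q₁' t ^ 2 + q₂' t ^ 2 + g ^ 2 * q₃' t ^ 2) = E)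
    (hB : ∀ t ∈ I, q₃' t + (1 / 2) * (q₁ t ^ 2 + q₂ t ^ 2) = B) :
    ∃ z' z'' z''' : ℝ → ℝ,
      (∀ t ∈ I,
        HasDerivWithinAt q₃' (z' t) I t ∧
        HasDerivWithinAt z' (z'' t) I t ∧
        HasDerivWithinAt z'' (z''' t) I t) ∧
      (∀ t ∈ I, z'' t + 2 * B * g ^ 2 * q₃' t + 2 * E - 3 * g ^ 2 * q₃' t ^ 2 = 0) := by
  refine ⟨fun t => -(q₁ t * q₁' t + q₂ t * q₂' t),
    fun t => 3 * g ^ 2 * q₃' t ^ 2 - 2 * B * g ^ 2 * q₃' t - 2 * E,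
    fun t => 6 * g ^ 2 * q₃' t * q₃'' t - 2 * B * g ^ 2 * q₃'' t,
    fun t ht => ⟨?_, ?_, ?_⟩, fun t ht => by ring⟩
  · have h := (hq₃' t ht).hasDerivWithinAt (s := I)
    rwa [heq₃ t ht] at h
  · have h : HasDerivAt (fun t => -(q₁ t * q₁' t + q₂ t * q₂' t))
        (-(q₁' t * q₁' t + q₁ t * q₁'' t + (q₂' t * q₂' t + q₂ t * q₂'' t))) t :=
      (((hq₁ t ht).mul (hq₁' t ht)).add ((hq₂ t ht).mul (hq₂' t ht))).neg
    have key : -(q₁' t * q₁' t + q₁ t * q₁'' t + (q₂' t * q₂' t + q₂ t * q₂'' t))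
        = 3 * g ^ 2 * q₃' t ^ 2 - 2 * B * g ^ 2 * q₃' t - 2 * E := by
      have h1 := heq₁ t ht
      have h2 := heq₂ t ht
      have h3 := hE t ht
      have h4 := hB t ht
      linear_combination (-(q₁ t)) * h1 + (-(q₂ t)) * h2 - 2 * h3 - 2 * g ^ 2 * q₃' t * h4
    rw [key] at h
    exact h.hasDerivWithinAt
  · have h : HasDerivAt (fun t => 3 * g ^ 2 * q₃' t ^ 2 - 2 * B * g ^ 2 * q₃' t - 2 * E)
        (6 * g ^ 2 * q₃' t * q₃'' t - 2 * B * g ^ 2 * q₃'' t) t := by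
      have := (((hq₃' t ht).pow 2).const_mul (3 * g ^ 2)).sub
        ((hq₃' t ht).const_mul (2 * B * g ^ 2))
      have := this.sub_const (2 * E)
      exact this.congr_deriv (by ring)
    exact h.hasDerivWithinAt
end

section
/- Let g > 0 and let (q₁,q₂,q₃) : I → ℝ³ be a solution of the conservative Maxwell–Bloch system q̈₁ = g² q₁ q̇₃, q̈₂ = g² q₂ q̇₃, q̈₃ = −( q₁ q̇₁ + q₂ q̇₂ ). Let E = (1/2)( q̇₁² + q̇₂² + g² q̇₃² ) and B = q̇₃ + (1/2)( q₁² + q₂² ) be the constant values of its first integrals, and fix t₀ ∈ I. Then the function t ↦ q̈₃(t) + 2 B g² q₃(t) + 2 E t − 3 g² ∫_{t₀}^{t} q̇₃(s)² ds is constant on I. -/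
/-- along any solution of the conservative Maxwell–Bloch system with
first-integral values `E` and `B`, the nonlocal quantity
`q̈₃(t) + 2Bg²q₃(t) + 2Et − 3g² ∫_{t₀}^{t} q̇₃(s)² ds` is constant on `I`. -/
theorem stmt16 (g : ℝ) (hg : 0 < g)
    (I : Set ℝ) (hI : I.OrdConnected)
    (q₁ q₂ q₃ q₁' q₂' q₃' q₁'' q₂'' q₃'' : ℝ → ℝ)
    (hq₁ : ∀ t ∈ I, HasDerivAt q₁ (q₁' t) t)
    (hq₂ : ∀ t ∈ I, HasDerivAt q₂ (q₂' t) t)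
    (hq₃ : ∀ t ∈ I, HasDerivAt q₃ (q₃' t) t)
    (hq₁' : ∀ t ∈ I, HasDerivAt q₁' (q₁'' t) t)
    (hq₂' : ∀ t ∈ I, HasDerivAt q₂' (q₂'' t) t)
    (hq₃' : ∀ t ∈ I, HasDerivAt q₃' (q₃'' t) t)
    (heq₁ : ∀ t ∈ I, q₁'' t = g ^ 2 * q₁ t * q₃' t)
    (heq₂ : ∀ t ∈ I, q₂'' t = g ^ 2 * q₂ t * q₃' t)
    (heq₃ : ∀ t ∈ I, q₃'' t = -(q₁ t * q₁' t + q₂ t * q₂' t))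
    (E B : ℝ)
    (hE : ∀ t ∈ I, (1 / 2) * (q₁' t ^ 2 + q₂' t ^ 2 + g ^ 2 * q₃' t ^ 2) = E)
    (hB : ∀ t ∈ I, q₃' t + (1 / 2) * (q₁ t ^ 2 + q₂ t ^ 2) = B)
    (t₀ : ℝ) (ht₀ : t₀ ∈ I) :
    ∀ t₁ ∈ I, ∀ t₂ ∈ I,
      (q₃'' t₁ + 2 * B * g ^ 2 * q₃ t₁ + 2 * E * t₁ - 3 * g ^ 2 * ∫ s in t₀..t₁, q₃' s ^ 2)
        = (q₃'' t₂ + 2 * B * g ^ 2 * q₃ t₂ + 2 * E * t₂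
            - 3 * g ^ 2 * ∫ s in t₀..t₂, q₃' s ^ 2) := by

  -- continuity facts on I
  have hcq₁ : ContinuousOn q₁ I := fun t ht => (hq₁ t ht).continuousAt.continuousWithinAt
  have hcq₂ : ContinuousOn q₂ I := fun t ht => (hq₂ t ht).continuousAt.continuousWithinAt
  have hcq₃ : ContinuousOn q₃ I := fun t ht => (hq₃ t ht).continuousAt.continuousWithinAt
  have hcq₁' : ContinuousOn q₁' I := fun t ht => (hq₁' t ht).continuousAt.continuousWithinAt
  have hcq₂' : ContinuousOn q₂' I := fun t ht => (hq₂' t ht).continuousAt.continuousWithinAt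
  have hcq₃' : ContinuousOn q₃' I := fun t ht => (hq₃' t ht).continuousAt.continuousWithinAt
  have hcq₃'' : ContinuousOn q₃'' I := by
    have : ContinuousOn (fun t => -(q₁ t * q₁' t + q₂ t * q₂' t)) I :=
      ((hcq₁.mul hcq₁').add (hcq₂.mul hcq₂')).neg
    exact this.congr heq₃
  set G : ℝ → ℝ := fun t => q₃'' t + 2 * B * g ^ 2 * q₃ t + 2 * E * t with hG
  have hcG : ContinuousOn G I :=
    (hcq₃''.add ((continuousOn_const.mul hcq₃))).add (continuousOn_const.mul continuousOn_id)
  -- key: derivative of G at interior points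
  have hGderiv : ∀ x ∈ I, I ∈ nhds x → HasDerivAt G (3 * g ^ 2 * q₃' x ^ 2) x := by
    intro x hx hnx
    have h1 : HasDerivAt (fun t => -(q₁ t * q₁' t + q₂ t * q₂' t))
        (-(q₁' x * q₁' x + q₁ x * q₁'' x + (q₂' x * q₂' x + q₂ x * q₂'' x))) x :=
      (((hq₁ x hx).mul (hq₁' x hx)).add ((hq₂ x hx).mul (hq₂' x hx))).neg
    have h2 : HasDerivAt q₃''
        (-(q₁' x * q₁' x + q₁ x * q₁'' x + (q₂' x * q₂' x + q₂ x * q₂'' x))) x := by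
      apply h1.congr_of_eventuallyEq
      filter_upwards [hnx] with t ht
      exact heq₃ t ht
    have h3 : HasDerivAt G
        (-(q₁' x * q₁' x + q₁ x * q₁'' x + (q₂' x * q₂' x + q₂ x * q₂'' x))
          + 2 * B * g ^ 2 * q₃' x + 2 * E) x := by
      have := (h2.add ((hq₃ x hx).const_mul (2 * B * g ^ 2))).add
        ((hasDerivAt_id x).const_mul (2 * E))
      simpa [mul_one, Pi.add_def] using this
    have key : (-(q₁' x * q₁' x + q₁ x * q₁'' x + (q₂' x * q₂' x + q₂ x * q₂'' x))
          + 2 * B * g ^ 2 * q₃' x + 2 * E) = 3 * g ^ 2 * q₃' x ^ 2 := by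
      have e1 := hE x hx
      have e2 := hB x hx
      have e3 := heq₁ x hx
      have e4 := heq₂ x hx
      linear_combination (-2:ℝ)*e1 + (-2*g^2*q₃' x)*e2 + (-q₁ x)*e3 + (-q₂ x)*e4
    rwa [key] at h3
  -- main step: G t₁ - G t₂ = 3g² ∫_{t₂}^{t₁} q₃'²
  have main : ∀ t₁ ∈ I, ∀ t₂ ∈ I,
      G t₁ - G t₂ = 3 * g ^ 2 * ∫ s in t₂..t₁, q₃' s ^ 2 := by
    intro t₁ ht₁ t₂ ht₂
    have hsub : Set.uIcc t₂ t₁ ⊆ I := hI.uIcc_subset ht₂ ht₁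
    have hint : IntervalIntegrable (fun s => 3 * g ^ 2 * q₃' s ^ 2) MeasureTheory.volume t₂ t₁ :=
      ((continuousOn_const.mul ((hcq₃'.mono hsub).pow 2)).intervalIntegrable)
    have := intervalIntegral.integral_eq_sub_of_hasDeriv_right
      (hcG.mono hsub)
      (fun x hx => by
        have hIoo : Set.Ioo (min t₂ t₁) (max t₂ t₁) ⊆ I := fun y hy =>
          hsub (Set.Ioo_subset_Icc_self hy)
        have hxI : x ∈ I := hIoo hx
        have hnx : I ∈ nhds x :=
          Filter.mem_of_superset (isOpen_Ioo.mem_nhds hx) hIoo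
        exact (hGderiv x hxI hnx).hasDerivWithinAt)
      hint
    rw [intervalIntegral.integral_const_mul] at this
    linarith [this]
  intro t₁ ht₁ t₂ ht₂
  have hsub1 : Set.uIcc t₀ t₁ ⊆ I := hI.uIcc_subset ht₀ ht₁
  have hsub2 : Set.uIcc t₀ t₂ ⊆ I := hI.uIcc_subset ht₀ ht₂
  have hi1 : IntervalIntegrable (fun s => q₃' s ^ 2) MeasureTheory.volume t₀ t₁ :=
    ((hcq₃'.mono hsub1).pow 2).intervalIntegrable
  have hi2 : IntervalIntegrable (fun s => q₃' s ^ 2) MeasureTheory.volume t₀ t₂ :=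
    ((hcq₃'.mono hsub2).pow 2).intervalIntegrable
  have hdiff : (∫ s in t₀..t₁, q₃' s ^ 2) - (∫ s in t₀..t₂, q₃' s ^ 2)
      = ∫ s in t₂..t₁, q₃' s ^ 2 :=
    intervalIntegral.integral_interval_sub_left hi1 hi2
  have hm := main t₁ ht₁ t₂ ht₂
  have : G t₁ - G t₂ = 3 * g ^ 2 * ((∫ s in t₀..t₁, q₃' s ^ 2) - ∫ s in t₀..t₂, q₃' s ^ 2) := by
    rw [hdiff]; exact hm
  simp only [hG] at this
  linarith [this]
end

section
/- Let a, b, c ≥ 0, g > 0, k ∈ ℝ, and let (q₁,q₂,q₃) : I → ℝ³ be a solution of the dissipative Maxwell–Bloch system q̈₁ = −a b q₁ − (a+b) q̇₁ + g² q₁ q̇₃, q̈₂ = −a b q₂ − (a+b) q̇₂ + g² q₂ q̇₃, q̈₃ = −a ( q₁² + q₂² ) − c ( q̇₃ − k ) − ( q₁ q̇₁ + q₂ q̇₂ ). Then, for any fixed t₀ ∈ I, the function t ↦ g² e^{ct} ( q₁(t)² + q₂(t)² + 2 q̇₃(t) − 2k ) + (2a − c) g² ∫_{t₀}^{t} e^{cs}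 ( q₁(s)² + q₂(s)² ) ds is constant on I. -/
/-- along any solution of the dissipative Maxwell–Bloch system, the
nonlocal quantity
`g² e^{ct}(q₁² + q₂² + 2q̇₃ − 2k) + (2a − c) g² ∫_{t₀}^{t} e^{cs}(q₁(s)² + q₂(s)²) ds`
is constant on `I`. -/
theorem stmt17 (a b c g k : ℝ) (ha : 0 ≤ a) (hb : 0 ≤ b) (hc : 0 ≤ c) (hg : 0 < g)
    (I : Set ℝ) (hI : I.OrdConnected)
    (q₁ q₂ q₃ q₁' q₂' q₃' q₁'' q₂'' q₃'' : ℝ → ℝ)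
    (hq₁ : ∀ t ∈ I, HasDerivAt q₁ (q₁' t) t)
    (hq₂ : ∀ t ∈ I, HasDerivAt q₂ (q₂' t) t)
    (hq₃ : ∀ t ∈ I, HasDerivAt q₃ (q₃' t) t)
    (hq₁' : ∀ t ∈ I, HasDerivAt q₁' (q₁'' t) t)
    (hq₂' : ∀ t ∈ I, HasDerivAt q₂' (q₂'' t) t)
    (hq₃' : ∀ t ∈ I, HasDerivAt q₃' (q₃'' t) t)
    (heq₁ : ∀ t ∈ I, q₁'' t = -(a * b) * q₁ t - (a + b) * q₁' t + g ^ 2 * q₁ t * q₃' t)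
    (heq₂ : ∀ t ∈ I, q₂'' t = -(a * b) * q₂ t - (a + b) * q₂' t + g ^ 2 * q₂ t * q₃' t)
    (heq₃ : ∀ t ∈ I, q₃'' t = -a * (q₁ t ^ 2 + q₂ t ^ 2) - c * (q₃' t - k)
      - (q₁ t * q₁' t + q₂ t * q₂' t))
    (t₀ : ℝ) (ht₀ : t₀ ∈ I) :
    ∀ t₁ ∈ I, ∀ t₂ ∈ I,
      (g ^ 2 * Real.exp (c * t₁) * (q₁ t₁ ^ 2 + q₂ t₁ ^ 2 + 2 * q₃' t₁ - 2 * k)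
        + (2 * a - c) * g ^ 2 * ∫ s in t₀..t₁, Real.exp (c * s) * (q₁ s ^ 2 + q₂ s ^ 2))
      = (g ^ 2 * Real.exp (c * t₂) * (q₁ t₂ ^ 2 + q₂ t₂ ^ 2 + 2 * q₃' t₂ - 2 * k)
        + (2 * a - c) * g ^ 2 * ∫ s in t₀..t₂, Real.exp (c * s) * (q₁ s ^ 2 + q₂ s ^ 2)) := by
  intro t₁ ht₁ t₂ ht₂
  set f : ℝ → ℝ := fun s => Real.exp (c * s) * (q₁ s ^ 2 + q₂ s ^ 2) with hf
  set G : ℝ → ℝ := fun t =>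
    g ^ 2 * Real.exp (c * t) * (q₁ t ^ 2 + q₂ t ^ 2 + 2 * q₃' t - 2 * k) with hG
  -- continuity of f on I
  have hfc : ContinuousOn f I := by
    intro t ht
    exact (((Real.continuous_exp.comp (continuous_const.mul continuous_id)).continuousAt).mul
      (((hq₁ t ht).continuousAt.pow 2).add ((hq₂ t ht).continuousAt.pow 2))).continuousWithinAt
  -- derivative of G
  have hGd : ∀ t ∈ I, HasDerivAt G ((c - 2 * a) * g ^ 2 * f t) t := by
    intro t ht
    have hexp : HasDerivAt (fun t => Real.exp (c * t)) (Real.exp (c * t) * c) t := by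
      simpa using ((hasDerivAt_id t).const_mul c).exp
    have hin : HasDerivAt (fun t => q₁ t ^ 2 + q₂ t ^ 2 + 2 * q₃' t - 2 * k)
        (2 * q₁ t ^ 1 * q₁' t + 2 * q₂ t ^ 1 * q₂' t + 2 * q₃'' t) t :=
      ((((hq₁ t ht).pow 2).add ((hq₂ t ht).pow 2)).add ((hq₃' t ht).const_mul 2)).sub_const _
    have hd := ((hexp.mul hin).const_mul (g ^ 2))
    have hfun : G = fun y => g ^ 2 * (Real.exp (c * y) * (q₁ y ^ 2 + q₂ y ^ 2 + 2 * q₃' y - 2 * k)) := by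
      funext y; simp only [hG]; ring
    rw [hfun]
    convert hd using 1
    case e'_4 => rfl
    case e'_5 => rfl
    case e'_8 => rfl
    rw [heq₃ t ht]; simp only [hf]; ring
  -- subintervals of I
  have hsub : ∀ u ∈ I, ∀ v ∈ I, Set.uIcc u v ⊆ I := fun u hu v hv =>
    hI.uIcc_subset hu hv
  have hint : ∀ u ∈ I, ∀ v ∈ I, IntervalIntegrable f MeasureTheory.volume u v := fun u hu v hv =>
    (hfc.mono (hsub u hu v hv)).intervalIntegrable
  -- FTC on t₁..t₂
  have hftc : ∫ s in t₁..t₂, (c - 2 * a) * g ^ 2 * f s = G t₂ - G t₁ :=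
    intervalIntegral.integral_eq_sub_of_hasDerivAt
      (fun s hs => hGd s (hsub t₁ ht₁ t₂ ht₂ hs))
      ((continuousOn_const.mul (hfc.mono (hsub t₁ ht₁ t₂ ht₂))).intervalIntegrable)
  have hadd : (∫ s in t₀..t₁, f s) + ∫ s in t₁..t₂, f s = ∫ s in t₀..t₂, f s :=
    intervalIntegral.integral_add_adjacent_intervals (hint t₀ ht₀ t₁ ht₁) (hint t₁ ht₁ t₂ ht₂)
  rw [intervalIntegral.integral_const_mul] at hftc
  show G t₁ + (2 * a - c) * g ^ 2 * ∫ s in t₀..t₁, f s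
      = G t₂ + (2 * a - c) * g ^ 2 * ∫ s in t₀..t₂, f s
  rw [← hadd, mul_add]
  have h3 : (2 * a - c) * g ^ 2 * ∫ s in t₁..t₂, f s = G t₁ - G t₂ := by
    rw [show (2 * a - c) * g ^ 2 = -((c - 2 * a) * g ^ 2) by ring, neg_mul, hftc]; ring
  linarith
end

section
/- Let a, b ≥ 0, g > 0, k ∈ ℝ, and set c = 2a. If (q₁,q₂,q₃) : I → ℝ³ is a solution of the dissipative Maxwell–Bloch system q̈₁ = −a b q₁ − (a+b) q̇₁ + g² q₁ q̇₃, q̈₂ = −a b q₂ − (a+b) q̇₂ + g² q₂ q̇₃, q̈₃ = −a ( q₁² + q₂² ) − 2a ( q̇₃ − k ) − ( q₁ q̇₁ + q₂ q̇₂ ), then M(t) = e^{2at} ( q₁(t)² + q₂(t)² + 2 q̇₃(t) − 2k ) is constant in t on I. -/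
/-- along any solution of the dissipative Maxwell–Bloch system with
`c = 2a`, the quantity `M(t) = e^{2at}(q₁² + q₂² + 2q̇₃ − 2k)` is a first integral. -/
theorem stmt18 (a b g k : ℝ) (ha : 0 ≤ a) (hb : 0 ≤ b) (hg : 0 < g)
    (I : Set ℝ) (hI : I.OrdConnected)
    (q₁ q₂ q₃ q₁' q₂' q₃' q₁'' q₂'' q₃'' : ℝ → ℝ)
    (hq₁ : ∀ t ∈ I, HasDerivAt q₁ (q₁' t) t)
    (hq₂ : ∀ t ∈ I, HasDerivAt q₂ (q₂' t) t)
    (hq₃ : ∀ t ∈ I, HasDerivAt q₃ (q₃' t) t)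
    (hq₁' : ∀ t ∈ I, HasDerivAt q₁' (q₁'' t) t)
    (hq₂' : ∀ t ∈ I, HasDerivAt q₂' (q₂'' t) t)
    (hq₃' : ∀ t ∈ I, HasDerivAt q₃' (q₃'' t) t)
    (heq₁ : ∀ t ∈ I, q₁'' t = -(a * b) * q₁ t - (a + b) * q₁' t + g ^ 2 * q₁ t * q₃' t)
    (heq₂ : ∀ t ∈ I, q₂'' t = -(a * b) * q₂ t - (a + b) * q₂' t + g ^ 2 * q₂ t * q₃' t)
    (heq₃ : ∀ t ∈ I, q₃'' t = -a * (q₁ t ^ 2 + q₂ t ^ 2) - 2 * a * (q₃' t - k)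
      - (q₁ t * q₁' t + q₂ t * q₂' t)) :
    ∀ t₁ ∈ I, ∀ t₂ ∈ I,
      Real.exp (2 * a * t₁) * (q₁ t₁ ^ 2 + q₂ t₁ ^ 2 + 2 * q₃' t₁ - 2 * k)
        = Real.exp (2 * a * t₂) * (q₁ t₂ ^ 2 + q₂ t₂ ^ 2 + 2 * q₃' t₂ - 2 * k) := by
  set F : ℝ → ℝ := fun t =>
    Real.exp (2 * a * t) * (q₁ t ^ 2 + q₂ t ^ 2 + 2 * q₃' t - 2 * k) with hF
  have hderiv : ∀ t ∈ I, HasDerivAt F 0 t := by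
    intro t ht
    have he : HasDerivAt (fun s => Real.exp (2 * a * s)) (2 * a * Real.exp (2 * a * t)) t := by
      simpa [mul_comm] using ((hasDerivAt_id t).const_mul (2 * a)).exp
    have hin : HasDerivAt (fun s => q₁ s ^ 2 + q₂ s ^ 2 + 2 * q₃' s - 2 * k)
        (2 * q₁ t * q₁' t + 2 * q₂ t * q₂' t + 2 * q₃'' t) t := by
      have h1 := ((hq₁ t ht).pow 2)
      have h2 := ((hq₂ t ht).pow 2)
      have h3 := (hq₃' t ht).const_mul 2
      have := ((h1.add h2).add h3).sub_const (2 * k)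
      refine this.congr_deriv ?_
      ring
    have := he.mul hin
    refine this.congr_deriv ?_
    rw [heq₃ t ht]
    ring
  have key : ∀ t₁ ∈ I, ∀ t₂ ∈ I, t₁ ≤ t₂ → F t₁ = F t₂ := by
    intro t₁ h₁ t₂ h₂ hle
    have hsub : Set.Icc t₁ t₂ ⊆ I := hI.out h₁ h₂
    have := constant_of_has_deriv_right_zero (f := F) (a := t₁) (b := t₂)
      (fun t ht => (hderiv t (hsub ht)).continuousAt.continuousWithinAt)
      (fun t ht => (hderiv t (hsub ⟨ht.1, ht.2.le⟩)).hasDerivWithinAt)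
      t₂ (Set.right_mem_Icc.mpr hle)
    exact this.symm
  intro t₁ h₁ t₂ h₂
  rcases le_total t₁ t₂ with h | h
  · exact key t₁ h₁ t₂ h₂ h
  · exact (key t₂ h₂ t₁ h₁ h).symm
end

section
/- Let a, b, c ≥ 0, g > 0, k ∈ ℝ, and let (q₁,q₂,q₃) : I → ℝ³ be a solution of the dissipative Maxwell–Bloch system q̈₁ = −a b q₁ − (a+b) q̇₁ + g² q₁ q̇₃, q̈₂ = −a b q₂ − (a+b) q̇₂ + g² q₂ q̇₃, q̈₃ = −a ( q₁² + q₂² ) − c ( q̇₃ − k ) − ( q₁ q̇₁ + q₂ q̇₂ ). Then N(t) = e^{(a+b)t} ( q₁(t) q̇₂(t) − q₂(t) q̇₁(t) ) is constant in t on I (in polar coordinates q₁ = r cos θ, q₂ = r sin θ this reads N = e^{(a+b)t} r² θ̇). -/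
/-- along any solution of the dissipative Maxwell–Bloch system, the
quantity `N(t) = e^{(a+b)t}(q₁ q̇₂ − q₂ q̇₁)` is a first integral (in polar coordinates in
the `(q₁, q₂)` plane it reads `N = e^{(a+b)t} r² θ̇`). -/
theorem stmt19 (a b c g k : ℝ) (ha : 0 ≤ a) (hb : 0 ≤ b) (hc : 0 ≤ c) (hg : 0 < g)
    (I : Set ℝ) (hI : I.OrdConnected)
    (q₁ q₂ q₃ q₁' q₂' q₃' q₁'' q₂'' q₃'' : ℝ → ℝ)
    (hq₁ : ∀ t ∈ I, HasDerivAt q₁ (q₁' t) t)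
    (hq₂ : ∀ t ∈ I, HasDerivAt q₂ (q₂' t) t)
    (hq₃ : ∀ t ∈ I, HasDerivAt q₃ (q₃' t) t)
    (hq₁' : ∀ t ∈ I, HasDerivAt q₁' (q₁'' t) t)
    (hq₂' : ∀ t ∈ I, HasDerivAt q₂' (q₂'' t) t)
    (hq₃' : ∀ t ∈ I, HasDerivAt q₃' (q₃'' t) t)
    (heq₁ : ∀ t ∈ I, q₁'' t = -(a * b) * q₁ t - (a + b) * q₁' t + g ^ 2 * q₁ t * q₃' t)
    (heq₂ : ∀ t ∈ I, q₂'' t = -(a * b) * q₂ t - (a + b) * q₂' t + g ^ 2 * q₂ t * q₃' t)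
    (heq₃ : ∀ t ∈ I, q₃'' t = -a * (q₁ t ^ 2 + q₂ t ^ 2) - c * (q₃' t - k)
      - (q₁ t * q₁' t + q₂ t * q₂' t)) :
    ∀ t₁ ∈ I, ∀ t₂ ∈ I,
      Real.exp ((a + b) * t₁) * (q₁ t₁ * q₂' t₁ - q₂ t₁ * q₁' t₁)
        = Real.exp ((a + b) * t₂) * (q₁ t₂ * q₂' t₂ - q₂ t₂ * q₁' t₂) := by
  set N : ℝ → ℝ := fun t => Real.exp ((a + b) * t) * (q₁ t * q₂' t - q₂ t * q₁' t) with hN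
  have hderiv : ∀ t ∈ I, HasDerivWithinAt N 0 I t := by
    intro t ht
    have hE : HasDerivAt (fun t => Real.exp ((a + b) * t))
        ((a + b) * Real.exp ((a + b) * t)) t := by
      have := (Real.hasDerivAt_exp ((a + b) * t)).comp t
        ((hasDerivAt_id t).const_mul (a + b))
      simpa [Function.comp_def, mul_comm] using this
    have hM : HasDerivAt (fun t => q₁ t * q₂' t - q₂ t * q₁' t)
        (q₁ t * q₂'' t - q₂ t * q₁'' t) t := by
      have h1 := (hq₁ t ht).mul (hq₂' t ht)
      have h2 := (hq₂ t ht).mul (hq₁' t ht)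
      have := h1.sub h2
      have heq : q₁' t * q₂' t + q₁ t * q₂'' t - (q₂' t * q₁' t + q₂ t * q₁'' t)
          = q₁ t * q₂'' t - q₂ t * q₁'' t := by ring
      rw [heq] at this
      exact this
    have h := hE.mul hM
    have hz : (a + b) * Real.exp ((a + b) * t) * (q₁ t * q₂' t - q₂ t * q₁' t)
        + Real.exp ((a + b) * t) * (q₁ t * q₂'' t - q₂ t * q₁'' t) = 0 := by
      rw [heq₁ t ht, heq₂ t ht]; ring
    rw [hz] at h
    exact h.hasDerivWithinAt
  intro t₁ ht₁ t₂ ht₂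
  have hconv : Convex ℝ I := hI.convex
  have := hconv.norm_image_sub_le_of_norm_hasDerivWithin_le
    (f' := fun _ => (0 : ℝ)) hderiv (C := 0) (fun x hx => by simp) ht₂ ht₁
  have : ‖N t₁ - N t₂‖ ≤ 0 := by simpa using this
  have : N t₁ = N t₂ := by
    have := norm_le_zero_iff.mp this
    linarith [sub_eq_zero.mp this]
  simpa [hN] using this
end
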